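/- Let ℓ = ∞, and let ξ : (0,∞) → V be locally absolutely continuous with ξ ∈ L²_ν((0,∞);V) and derivative ξ' ∈ L²_ν((0,∞);V). Then sup_{τ ∈ (0,∞)} ‖ξ(τ)‖_V < ∞. -/

import Mathlib

open MeasureTheory Set Filter

/-- Case `ℓ = ∞`, `Ω = (0,∞)`. If `ξ` is locally absolutely continuous
on `(0,∞)` with `ξ ∈ L²_ν` and derivative `ξ' ∈ L²_ν` (where `ν = 1/μ`), then
`sup_{τ ∈ (0,∞)} ‖ξ(τ)‖ < ∞`. -/
theorem stmt3
    {V : Type*} [NormedAddCommGroup V] [InnerProductSpace ℝ V] [CompleteSpace V]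
    (μ : ℝ → ℝ)
    (hμpos : ∀ s ∈ Ioi (0:ℝ), 0 < μ s)
    (hμmono : AntitoneOn μ (Ioi 0))
    (hμint : IntegrableOn μ (Ioi 0))
    (ξ ξ' : ℝ → V)
    (hξ'loc : ∀ a b : ℝ, 0 < a → IntegrableOn ξ' (Icc a b))
    (hFTC : ∀ a b : ℝ, 0 < a → a ≤ b → ξ b = ξ a + ∫ s in a..b, ξ' s)
    (hξL2 : IntegrableOn (fun s => (μ s)⁻¹ * ‖ξ s‖ ^ 2) (Ioi 0))
    (hξ'L2 : IntegrableOn (fun s => (μ s)⁻¹ * ‖ξ' s‖ ^ 2) (Ioi 0)) :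
    ∃ C : ℝ, ∀ τ ∈ Ioi (0:ℝ), ‖ξ τ‖ ≤ C := by
  have hmeas : AEStronglyMeasurable ξ' (volume.restrict (Ioi 0)) := by
    have h1 : Ioi (0:ℝ) = ⋃ n : ℕ, Icc (1/((n:ℝ)+1)) ((n:ℝ)+1) := by
      ext x
      simp only [mem_Ioi, mem_iUnion, mem_Icc]
      constructor
      · intro hx
        obtain ⟨n, hn⟩ := exists_nat_gt (max (1/x) x)
        rw [max_lt_iff] at hn
        refine ⟨n, ?_, ?_⟩
        · rw [div_le_iff₀ (by positivity)]
          have h1x := hn.1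
          rw [div_lt_iff₀ hx] at h1x
          nlinarith
        · linarith [hn.2]
      · rintro ⟨n, h1, h2⟩
        have : (0:ℝ) < 1/(n+1) := by positivity
        linarith
    rw [h1, aestronglyMeasurable_iUnion_iff]
    intro n
    exact (hξ'loc (1/(n+1)) (n+1) (by positivity)).aestronglyMeasurable
  have hint : IntegrableOn (fun s => ‖ξ' s‖) (Ioi 0) := by
    have hg : IntegrableOn (fun s => (μ s + (μ s)⁻¹ * ‖ξ' s‖^2)/2) (Ioi 0) :=
      (hμint.add hξ'L2).div_const 2
    refine Integrable.mono' hg hmeas.norm ?_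
    filter_upwards [ae_restrict_mem measurableSet_Ioi] with s hs
    have hμ := hμpos s hs
    have key : ‖ξ' s‖ * 2 * μ s ≤ μ s ^ 2 + ‖ξ' s‖ ^ 2 := by
      nlinarith [sq_nonneg (μ s - ‖ξ' s‖)]
    rw [norm_norm]
    calc ‖ξ' s‖ = (‖ξ' s‖ * 2 * μ s) / (2 * μ s) := by field_simp
      _ ≤ (μ s ^ 2 + ‖ξ' s‖ ^ 2) / (2 * μ s) :=
          (div_le_div_iff_of_pos_right (by linarith)).mpr key
      _ = (μ s + (μ s)⁻¹ * ‖ξ' s‖ ^ 2) / 2 := by field_simp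
  have hnonneg : 0 ≤ᵐ[volume.restrict (Ioi (0:ℝ))] fun s => ‖ξ' s‖ :=
    ae_of_all _ fun s => norm_nonneg _
  refine ⟨‖ξ 1‖ + ∫ s in Ioi (0:ℝ), ‖ξ' s‖, fun τ hτ => ?_⟩
  have hτ0 : (0:ℝ) < τ := hτ
  rcases le_total τ 1 with h | h
  · have heq := hFTC τ 1 hτ0 h
    have hξτ : ξ τ = ξ 1 - ∫ s in τ..1, ξ' s := by rw [heq]; abel
    rw [hξτ]
    calc ‖ξ 1 - ∫ s in τ..1, ξ' s‖ ≤ ‖ξ 1‖ + ‖∫ s in τ..1, ξ' s‖ := norm_sub_le _ _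
      _ ≤ ‖ξ 1‖ + ∫ s in τ..1, ‖ξ' s‖ := by
          gcongr
          exact intervalIntegral.norm_integral_le_integral_norm h
      _ ≤ ‖ξ 1‖ + ∫ s in Ioi (0:ℝ), ‖ξ' s‖ := by
          gcongr
          rw [intervalIntegral.integral_of_le h]
          exact setIntegral_mono_set hint hnonneg
            (HasSubset.Subset.eventuallyLE fun x hx => hτ0.trans hx.1)
  · have heq := hFTC 1 τ one_pos h
    rw [heq]
    calc ‖ξ 1 + ∫ s in (1:ℝ)..τ, ξ' s‖ ≤ ‖ξ 1‖ + ‖∫ s in (1:ℝ)..τ, ξ' s‖ := norm_add_le _ _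
      _ ≤ ‖ξ 1‖ + ∫ s in (1:ℝ)..τ, ‖ξ' s‖ := by
          gcongr
          exact intervalIntegral.norm_integral_le_integral_norm h
      _ ≤ ‖ξ 1‖ + ∫ s in Ioi (0:ℝ), ‖ξ' s‖ := by
          gcongr
          rw [intervalIntegral.integral_of_le h]
          exact setIntegral_mono_set hint hnonneg
            (HasSubset.Subset.eventuallyLE fun x hx => one_pos.trans hx.1)
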